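/- arXiv:2511.16396 — 2 statements merged into one kernel-verified Lean document; each statement's English description precedes it below -/
import Mathlib

section
/- Let q ∈ ℂ with 0 < |q| < 1 and x, y ∈ ℂ* generic. Then j(x;q)·j(y;q) = j(-xy;q²)·j(-q x⁻¹ y; q²) - x · j(-xyq; q²) · j(-x⁻¹ y; q²), where j(z;q) := (z;q)_∞(q/z;q)_∞(q;q)_∞. -/
noncomputable def qPoch (x q : ℂ) : ℂ := ∏' k : ℕ, (1 - x * q ^ k)

noncomputable def jP (z q : ℂ) : ℂ := qPoch z q * qPoch (q / z) q * qPoch q q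

open Filter Finset Topology

/-- key estimate: `‖∏ u - 1‖ ≤ ∏ (1 + ‖u - 1‖) - 1`. -/
lemma prod_sub_one_est (u : ℕ → ℂ) (t : Finset ℕ) :
    ‖(∏ i ∈ t, u i) - 1‖ ≤ (∏ i ∈ t, (1 + ‖u i - 1‖)) - 1 := by
  classical
  induction t using Finset.induction with
  | empty => simp
  | insert a t hnotmem ih =>
    rw [Finset.prod_insert hnotmem, Finset.prod_insert hnotmem]
    have h1 : u a * (∏ i ∈ t, u i) - 1
        = (u a - 1) * (∏ i ∈ t, u i) + ((∏ i ∈ t, u i) - 1) := by ring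
    have hP : ‖∏ i ∈ t, u i‖ ≤ ∏ i ∈ t, (1 + ‖u i - 1‖) := by
      have := norm_sub_norm_le (∏ i ∈ t, u i) 1
      calc ‖∏ i ∈ t, u i‖ ≤ ‖(∏ i ∈ t, u i) - 1‖ + 1 := by
            have := norm_sub_norm_le (∏ i ∈ t, u i) 1; simp at this ⊢; linarith
        _ ≤ ∏ i ∈ t, (1 + ‖u i - 1‖) := by linarith [ih]
    calc ‖u a * (∏ i ∈ t, u i) - 1‖
        ≤ ‖u a - 1‖ * ‖∏ i ∈ t, u i‖ + ‖(∏ i ∈ t, u i) - 1‖ := by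
          rw [h1]; refine (norm_add_le _ _).trans ?_; rw [norm_mul]
      _ ≤ ‖u a - 1‖ * (∏ i ∈ t, (1 + ‖u i - 1‖)) + ((∏ i ∈ t, (1 + ‖u i - 1‖)) - 1) := by
          have h0 : (0:ℝ) ≤ ‖u a - 1‖ := norm_nonneg _
          nlinarith [ih]
      _ = (1 + ‖u a - 1‖) * (∏ i ∈ t, (1 + ‖u i - 1‖)) - 1 := by ring

lemma prod_one_add_le_exp (ε : ℕ → ℝ) (hε : ∀ i, 0 ≤ ε i) (t : Finset ℕ) :
    (∏ i ∈ t, (1 + ε i)) ≤ Real.exp (∑ i ∈ t, ε i) := by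
  rw [Real.exp_sum]
  refine Finset.prod_le_prod (fun i _ => by linarith [hε i]) (fun i _ => ?_)
  linarith [Real.add_one_le_exp (ε i)]

lemma multipliable_of_summable_sub_one {u : ℕ → ℂ}
    (h : Summable fun i => ‖u i - 1‖) : Multipliable u := by
  classical
  set ε : ℕ → ℝ := fun i => ‖u i - 1‖ with hεdef
  have hεnn : ∀ i, 0 ≤ ε i := fun i => norm_nonneg _
  set C : ℝ := Real.exp (∑' i, ε i) with hC
  have hCpos : 0 < C := Real.exp_pos _
  -- bound on any finset product
  have hPbd : ∀ t : Finset ℕ, ‖∏ i ∈ t, u i‖ ≤ C := by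
    intro t
    have h1 : ‖∏ i ∈ t, u i‖ ≤ ∏ i ∈ t, (1 + ε i) := by
      have := prod_sub_one_est u t
      have h2 := norm_sub_norm_le (∏ i ∈ t, u i) 1
      simp only [norm_one] at h2
      linarith
    refine h1.trans ((prod_one_add_le_exp ε hεnn t).trans ?_)
    exact Real.exp_le_exp.mpr (Summable.sum_le_tsum t (fun i _ => hεnn i) h)
  -- key pair estimate
  have key : ∀ s t : Finset ℕ, s ⊆ t →
      dist (∏ i ∈ t, u i) (∏ i ∈ s, u i) ≤ C * (Real.exp (∑ i ∈ t \ s, ε i) - 1) := by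
    intro s t hst
    rw [dist_eq_norm, ← Finset.prod_sdiff hst]
    have : (∏ i ∈ t \ s, u i) * (∏ i ∈ s, u i) - (∏ i ∈ s, u i)
        = ((∏ i ∈ t \ s, u i) - 1) * (∏ i ∈ s, u i) := by ring
    rw [this, norm_mul]
    have h1 := prod_sub_one_est u (t \ s)
    have h2 := prod_one_add_le_exp ε hεnn (t \ s)
    have h3 := hPbd s
    have h4 : (0:ℝ) ≤ ‖(∏ i ∈ t \ s, u i) - 1‖ := norm_nonneg _
    have h5 : ‖∏ i ∈ s, u i‖ ≥ 0 := norm_nonneg _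
    calc ‖(∏ i ∈ t \ s, u i) - 1‖ * ‖∏ i ∈ s, u i‖
        ≤ (Real.exp (∑ i ∈ t \ s, ε i) - 1) * C := by
          have hle : ‖(∏ i ∈ t \ s, u i) - 1‖ ≤ Real.exp (∑ i ∈ t \ s, ε i) - 1 := by linarith
          have hnn : (0:ℝ) ≤ Real.exp (∑ i ∈ t \ s, ε i) - 1 := by
            have : (0:ℝ) ≤ ∑ i ∈ t \ s, ε i := Finset.sum_nonneg (fun i _ => hεnn i)
            nlinarith [Real.one_le_exp this]
          exact mul_le_mul hle h3 h5 hnn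
      _ = C * (Real.exp (∑ i ∈ t \ s, ε i) - 1) := by ring
  -- tail sums small
  have htail : Tendsto (fun N => ∑' k, ε (k + N)) atTop (𝓝 0) := tendsto_sum_nat_add ε
  -- sum over finset avoiding range N is at most the tail
  have hsum_tail : ∀ (N : ℕ) (F : Finset ℕ), (∀ i ∈ F, N ≤ i) →
      ∑ i ∈ F, ε i ≤ ∑' k, ε (k + N) := by
    intro N F hF
    have himg : ∑ i ∈ F, ε i = ∑ j ∈ F.image (· - N), ε (j + N) := by
      rw [Finset.sum_image]
      · refine Finset.sum_congr rfl (fun i hi => ?_)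
        have := hF i hi; congr 1; omega
      · intro a ha b hb hab
        have := hF a ha; have := hF b hb; simp only at hab; omega
    rw [himg]
    exact Summable.sum_le_tsum _ (fun i _ => hεnn _) ((summable_nat_add_iff N).mpr h)
  -- Cauchy
  have hcauchy : CauchySeq (fun t : Finset ℕ => ∏ i ∈ t, u i) := by
    rw [Metric.cauchySeq_iff]
    intro δ hδ
    have hten : Tendsto (fun N => C * (Real.exp (∑' k, ε (k + N)) - 1)) atTop (𝓝 0) := by
      have h1 : Tendsto (fun N => Real.exp (∑' k, ε (k + N))) atTop (𝓝 (Real.exp 0)) :=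
        (Real.continuous_exp.continuousAt.tendsto).comp htail
      have h2 : Tendsto (fun N => Real.exp (∑' k, ε (k + N)) - 1) atTop (𝓝 0) := by
        simpa using h1.sub (tendsto_const_nhds (x := (1:ℝ)))
      simpa using (tendsto_const_nhds (x := C)).mul h2
    obtain ⟨N, hN⟩ := (hten.eventually (gt_mem_nhds (show (0:ℝ) < δ/2 by linarith))).exists
    refine ⟨Finset.range N, fun s hs t ht => ?_⟩
    have hb : ∀ w : Finset ℕ, Finset.range N ⊆ w →
        dist (∏ i ∈ w, u i) (∏ i ∈ Finset.range N, u i) ≤ C * (Real.exp (∑' k, ε (k + N)) - 1) := by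
      intro w hw
      refine (key _ _ hw).trans ?_
      have h1 : ∑ i ∈ w \ Finset.range N, ε i ≤ ∑' k, ε (k + N) := by
        refine hsum_tail N _ (fun i hi => ?_)
        simp [Finset.mem_sdiff, Finset.mem_range] at hi; omega
      have := Real.exp_le_exp.mpr h1
      nlinarith
    calc dist (∏ i ∈ s, u i) (∏ i ∈ t, u i)
        ≤ dist (∏ i ∈ s, u i) (∏ i ∈ Finset.range N, u i)
          + dist (∏ i ∈ t, u i) (∏ i ∈ Finset.range N, u i) := dist_triangle_right _ _ _
      _ < δ := by have := hb s hs; have := hb t ht; linarith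
  obtain ⟨L, hL⟩ := cauchySeq_tendsto_of_complete hcauchy
  exact ⟨L, hL⟩


noncomputable def Qp (q : ℂ) (n : ℕ) : ℂ := ∏ j ∈ Finset.range n, (1 - q^(j+1))

noncomputable def gb (q : ℂ) (n k : ℕ) : ℂ :=
  if k ≤ n then Qp q n / (Qp q k * Qp q (n-k)) else 0

lemma one_sub_pow_ne_zero {q : ℂ} (hq : ‖q‖ < 1) (j : ℕ) : (1 : ℂ) - q^(j+1) ≠ 0 := by
  intro h
  have h2 : ‖q^(j+1)‖ < 1 := by
    rw [norm_pow]
    exact pow_lt_one₀ (norm_nonneg _) hq (Nat.succ_ne_zero j)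
  rw [sub_eq_zero] at h
  rw [← h] at h2; simp at h2

lemma Qp_ne_zero {q : ℂ} (hq : ‖q‖ < 1) (n : ℕ) : Qp q n ≠ 0 :=
  Finset.prod_ne_zero_iff.mpr fun j _ => one_sub_pow_ne_zero hq j

lemma Qp_succ (q : ℂ) (n : ℕ) : Qp q (n+1) = Qp q n * (1 - q^(n+1)) :=
  Finset.prod_range_succ _ n

lemma Qp_zero (q : ℂ) : Qp q 0 = 1 := rfl

lemma gb_zero {q : ℂ} (hq : ‖q‖ < 1) (n : ℕ) : gb q n 0 = 1 := by
  simp [gb, Qp_zero, div_self (Qp_ne_zero hq n)]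

lemma gb_self {q : ℂ} (hq : ‖q‖ < 1) (n : ℕ) : gb q n n = 1 := by
  simp [gb, Qp_zero, div_self (Qp_ne_zero hq n)]

lemma gb_of_gt {q : ℂ} {n k : ℕ} (h : n < k) : gb q n k = 0 := by
  simp [gb, Nat.not_le.mpr h]

lemma gb_pascal {q : ℂ} (hq : ‖q‖ < 1) {N j : ℕ} (hj : j ≤ N) :
    gb q (N+1) (j+1) = gb q N (j+1) + q^(N-j) * gb q N j := by
  rcases eq_or_lt_of_le hj with rfl | hlt
  · rw [gb_self hq, gb_of_gt (Nat.lt_succ_self _), gb_self hq]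
    simp
  · obtain ⟨d, rfl⟩ : ∃ d, N = j + (d+1) := ⟨N - j - 1, by omega⟩
    have e1 : j + (d+1) + 1 - (j+1) = d + 1 := by omega
    have e2 : j + (d+1) - (j+1) = d := by omega
    have e3 : j + (d+1) - j = d+1 := by omega
    rw [gb, gb, gb, if_pos (by omega), if_pos (by omega), if_pos (by omega), e1, e2, e3]
    have f1 : Qp q (j + (d+1) + 1) = Qp q (j + (d+1)) * (1 - q^(j+(d+1)+1)) := Qp_succ q _
    have f2 : Qp q (d+1) = Qp q d * (1 - q^(d+1)) := Qp_succ q d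
    have f3 : Qp q (j+1) = Qp q j * (1 - q^(j+1)) := Qp_succ q j
    rw [f1, f2, f3]
    have h1 := Qp_ne_zero hq (j + (d+1))
    have h2 := Qp_ne_zero hq d
    have h3 := Qp_ne_zero hq j
    have h4 := one_sub_pow_ne_zero hq d
    have h5 := one_sub_pow_ne_zero hq j
    field_simp
    rw [show j + (d+1) + 1 = (d+1) + (j+1) by ring, pow_add]
    ring

lemma eN_succ (j : ℕ) : (j+1)*j/2 = j*(j-1)/2 + j := by
  have h : (j+1)*j = j*(j-1) + 2*j := by
    cases j with
    | zero => simp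
    | succ m => simp [Nat.succ_sub_one]; ring
  rw [h, Nat.add_mul_div_left _ _ (by norm_num : 0 < 2)]

lemma qbinom {q : ℂ} (hq : ‖q‖ < 1) (N : ℕ) (x : ℂ) :
    ∏ k ∈ Finset.range N, (1 + x * q^k)
      = ∑ j ∈ Finset.range (N+1), gb q N j * q^(j*(j-1)/2) * x^j := by
  induction N generalizing x with
  | zero => simp [gb_zero hq]
  | succ N ih =>
    rw [Finset.prod_range_succ, ih x]
    have expand : (∑ j ∈ Finset.range (N+1), gb q N j * q^(j*(j-1)/2) * x^j) * (1 + x*q^N)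
        = (∑ j ∈ Finset.range (N+1), gb q N j * q^(j*(j-1)/2) * x^j)
          + (∑ j ∈ Finset.range (N+1), gb q N j * q^(j*(j-1)/2) * q^N * x^(j+1)) := by
      rw [mul_add, mul_one, Finset.sum_mul]
      congr 1
      refine Finset.sum_congr rfl fun j _ => ?_
      ring
    rw [expand]
    rw [Finset.sum_range_succ' (fun j => gb q (N+1) j * q^(j*(j-1)/2) * x^j) (N+1)]
    rw [Finset.sum_range_succ' (fun j => gb q N j * q^(j*(j-1)/2) * x^j) N]
    simp only [Nat.add_sub_cancel, gb_zero hq]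
    have last0 : ∑ j ∈ Finset.range N, gb q N (j+1) * q^((j+1)*j/2) * x^(j+1)
        = ∑ j ∈ Finset.range (N+1), gb q N (j+1) * q^((j+1)*j/2) * x^(j+1) := by
      rw [Finset.sum_range_succ, gb_of_gt (Nat.lt_succ_self N)]
      simp
    have key : ∑ j ∈ Finset.range (N+1), gb q (N+1) (j+1) * q^((j+1)*j/2) * x^(j+1)
        = ∑ j ∈ Finset.range (N+1), (gb q N (j+1) * q^((j+1)*j/2)
            + gb q N j * q^(j*(j-1)/2) * q^N) * x^(j+1) := by
      refine Finset.sum_congr rfl fun j hj => ?_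
      have hjN : j ≤ N := by simp at hj; omega
      rw [gb_pascal hq hjN]
      have hq2 : q^(N-j) * q^((j+1)*j/2) = q^(j*(j-1)/2) * q^N := by
        rw [← pow_add, ← pow_add, eN_succ j]
        congr 1; omega
      linear_combination (gb q N j * x^(j+1)) * hq2
    rw [key]
    have split : ∑ j ∈ Finset.range (N+1), (gb q N (j+1) * q^((j+1)*j/2)
            + gb q N j * q^(j*(j-1)/2) * q^N) * x^(j+1)
        = (∑ j ∈ Finset.range (N+1), gb q N (j+1) * q^((j+1)*j/2) * x^(j+1))
          + ∑ j ∈ Finset.range (N+1), gb q N j * q^(j*(j-1)/2) * q^N * x^(j+1) := by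
      rw [← Finset.sum_add_distrib]
      exact Finset.sum_congr rfl fun j _ => by ring
    rw [split, ← last0]
    ring


def eZ (m : ℤ) : ℤ := m*(m-1)/2

noncomputable def trm (p z : ℂ) (m : ℤ) : ℂ := (-1:ℂ)^m * z^m * p^(eZ m)

lemma two_eZ (m : ℤ) : 2 * eZ m = m*(m-1) := by
  have h : Even (m*(m-1)) := by
    have := Int.even_mul_succ_self (m-1)
    have h2 : (m-1) * (m-1+1) = m*(m-1) := by ring
    rwa [h2] at this
  exact Int.mul_ediv_cancel' (even_iff_two_dvd.mp h)

lemma natCast_tri (j : ℕ) : 2 * ((j*(j-1)/2 : ℕ) : ℤ) = (j:ℤ)*((j:ℤ)-1) := by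
  have hev : 2 ∣ j*(j-1) := by
    cases j with
    | zero => simp
    | succ m =>
      have := Nat.even_mul_succ_self m
      have h2 : (m+1)*(m+1-1) = m*(m+1) := by simp [Nat.mul_comm]
      rw [h2]
      exact this.two_dvd
  have hn : 2*(j*(j-1)/2) = j*(j-1) := Nat.mul_div_cancel' hev
  calc 2 * ((j*(j-1)/2 : ℕ) : ℤ) = ((2*(j*(j-1)/2) : ℕ) : ℤ) := by push_cast; ring
    _ = ((j*(j-1) : ℕ) : ℤ) := by rw [hn]
    _ = (j:ℤ)*((j:ℤ)-1) := by
        cases j with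
        | zero => simp
        | succ m => push_cast [Nat.succ_sub_one]; ring

lemma term_transform {q x : ℂ} (hq0 : q ≠ 0) (hx : x ≠ 0) (N j : ℕ) :
    q^(j*(j-1)/2) * (-(x * q^(-(N:ℤ))))^j
      = ((-x)^N * q^(-((N:ℤ)*((N:ℤ)+1)/2))) * trm q x ((j:ℤ) - N) := by
  have hne1 : (-1 : ℂ) ≠ 0 := by norm_num
  set m : ℤ := (j:ℤ) - N with hm
  rw [trm]
  have e1 : (-(x * q^(-(N:ℤ))))^j = (-1:ℂ)^(j:ℤ) * x^(j:ℤ) * q^(-(N:ℤ)*(j:ℤ)) := by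
    rw [show -(x * q^(-(N:ℤ))) = (-1) * x * q^(-(N:ℤ)) by ring, mul_pow, mul_pow,
      ← zpow_natCast (-1:ℂ) j, ← zpow_natCast x j, ← zpow_natCast (q^(-(N:ℤ))) j, ← zpow_mul]
  have e2 : (q:ℂ)^(j*(j-1)/2 : ℕ) = q^(((j*(j-1)/2 : ℕ)) : ℤ) := (zpow_natCast q _).symm
  have e3 : ((-x):ℂ)^N = (-1:ℂ)^(N:ℤ) * x^(N:ℤ) := by
    rw [neg_pow, ← zpow_natCast (-1:ℂ) N, ← zpow_natCast x N]
  rw [e1, e2, e3]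
  -- exponent identity for q
  have d1 : 2*((((j*(j-1)/2 : ℕ)) : ℤ)) = (j:ℤ)*((j:ℤ)-1) := natCast_tri j
  have d2 : 2*((N:ℤ)*((N:ℤ)+1)/2) = (N:ℤ)*((N:ℤ)+1) := by
    have h : Even ((N:ℤ)*((N:ℤ)+1)) := Int.even_mul_succ_self (N:ℤ)
    exact Int.mul_ediv_cancel' (even_iff_two_dvd.mp h)
  have d3 : 2*(eZ m) = m*(m-1) := two_eZ m
  have hexp : (((j*(j-1)/2 : ℕ)) : ℤ) + (-(N:ℤ)*(j:ℤ))
      = (-((N:ℤ)*((N:ℤ)+1)/2)) + eZ m := by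
    have hr : m*(m-1) = (j:ℤ)*((j:ℤ)-1) - 2*(N:ℤ)*(j:ℤ) + (N:ℤ)*((N:ℤ)+1) := by
      rw [hm]; ring
    linarith
  have hqexp : q^((((j*(j-1)/2 : ℕ)) : ℤ)) * q^(-(N:ℤ)*(j:ℤ))
      = q^(-((N:ℤ)*((N:ℤ)+1)/2)) * q^(eZ m) := by
    rw [← zpow_add₀ hq0, ← zpow_add₀ hq0, hexp]
  have hsexp : (-1:ℂ)^(N:ℤ) * (-1:ℂ)^m = (-1:ℂ)^(j:ℤ) := by
    rw [← zpow_add₀ hne1]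
    congr 1; rw [hm]; ring
  have hxexp : x^(N:ℤ) * x^m = x^(j:ℤ) := by
    rw [← zpow_add₀ hx]
    congr 1; rw [hm]; ring
  calc q^((((j*(j-1)/2 : ℕ)) : ℤ)) * ((-1:ℂ)^(j:ℤ) * x^(j:ℤ) * q^(-(N:ℤ)*(j:ℤ)))
      = ((-1:ℂ)^(j:ℤ) * x^(j:ℤ)) * (q^((((j*(j-1)/2 : ℕ)) : ℤ)) * q^(-(N:ℤ)*(j:ℤ))) := by ring
    _ = ((-1:ℂ)^(N:ℤ) * (-1:ℂ)^m * (x^(N:ℤ) * x^m)) * (q^(-((N:ℤ)*((N:ℤ)+1)/2)) * q^(eZ m)) := by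
        rw [hqexp, hsexp, hxexp]
    _ = (-1:ℂ)^(N:ℤ) * x^(N:ℤ) * q^(-((N:ℤ)*((N:ℤ)+1)/2)) * ((-1:ℂ)^m * x^m * q^(eZ m)) := by ring


lemma prod_q_zpow {q : ℂ} (hq0 : q ≠ 0) (f : ℕ → ℤ) (N : ℕ) :
    ∏ k ∈ Finset.range N, q^(f k) = q^(∑ k ∈ Finset.range N, f k) := by
  induction N with
  | zero => simp
  | succ N ih => rw [Finset.prod_range_succ, Finset.sum_range_succ, ih, zpow_add₀ hq0]

lemma tri_int (N : ℕ) : 2*((N:ℤ)*((N:ℤ)+1)/2) = (N:ℤ)*((N:ℤ)+1) :=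
  Int.mul_ediv_cancel' (even_iff_two_dvd.mp (Int.even_mul_succ_self (N:ℤ)))

lemma sum_neg_succ (N : ℕ) :
    (∑ k ∈ Finset.range N, -((k:ℤ)+1)) = -((N:ℤ)*((N:ℤ)+1)/2) := by
  induction N with
  | zero => simp
  | succ N ih =>
    rw [Finset.sum_range_succ, ih]
    have h1 := tri_int N
    have h2 := tri_int (N+1)
    push_cast at h2 ⊢
    have h3 : ((N:ℤ)+1)*((N:ℤ)+1+1) = (N:ℤ)*((N:ℤ)+1) + 2*((N:ℤ)+1) := by ring
    linarith

lemma finite_jtp {q x : ℂ} (hq0 : q ≠ 0) (hq : ‖q‖ < 1) (hx : x ≠ 0) (N : ℕ) :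
    (∏ k ∈ Finset.range N, (1 - (q/x) * q^k)) * (∏ k ∈ Finset.range N, (1 - x * q^k))
      = ∑ j ∈ Finset.range (2*N+1), gb q (2*N) j * trm q x ((j:ℤ) - N) := by
  set u : ℂ := -(x * q^(-(N:ℤ))) with hu
  set C : ℂ := (-x)^N * q^(-((N:ℤ)*((N:ℤ)+1)/2)) with hC
  have hCne : C ≠ 0 := mul_ne_zero (pow_ne_zero _ (neg_ne_zero.mpr hx)) (zpow_ne_zero _ hq0)
  have hbin := qbinom hq (2*N) u
  have hB : ∀ k : ℕ, 1 + u*q^(N+k) = 1 - x*q^k := by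
    intro k
    rw [hu]
    have : q^(-(N:ℤ)) * q^(N+k : ℕ) = q^k := by
      rw [← zpow_natCast q (N+k), ← zpow_natCast q k, ← zpow_add₀ hq0]
      congr 1; push_cast; ring
    rw [show -(x * q^(-(N:ℤ))) * q^(N+k) = -(x * (q^(-(N:ℤ)) * q^(N+k))) by ring, this]
    ring
  have hAfact : ∀ k ∈ Finset.range N,
      1 + u*q^(N-1-k) = (-x * q^(-((k:ℤ)+1))) * (1 - (q/x)*q^k) := by
    intro k hk
    simp only [Finset.mem_range] at hk
    rw [hu]
    have hcast : ((N-1-k : ℕ) : ℤ) = (N:ℤ) - 1 - k := by omega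
    have h1 : q^(-(N:ℤ)) * q^(N-1-k : ℕ) = q^(-((k:ℤ)+1)) := by
      rw [← zpow_natCast q (N-1-k), ← zpow_add₀ hq0, hcast]
      congr 1; ring
    have h2 : q^(-((k:ℤ)+1)) * q^(k+1 : ℕ) = 1 := by
      rw [← zpow_natCast q (k+1), ← zpow_add₀ hq0]
      have : -((k:ℤ)+1) + ((k:ℕ)+1 : ℕ) = 0 := by push_cast; ring
      rw [this, zpow_zero]
    have h3 : (q/x)*q^k * x = q^(k+1) := by
      field_simp; ring
    have lhs_eq : 1 + -(x * q^(-(N:ℤ))) * q^(N-1-k) = 1 - x * q^(-((k:ℤ)+1)) := by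
      rw [show -(x * q^(-(N:ℤ))) * q^(N-1-k) = -(x * (q^(-(N:ℤ)) * q^(N-1-k))) by ring, h1]
      ring
    rw [lhs_eq]
    have expand : (-x * q^(-((k:ℤ)+1))) * (1 - (q/x)*q^k)
        = -x * q^(-((k:ℤ)+1)) + q^(-((k:ℤ)+1)) * ((q/x)*q^k * x) := by ring
    rw [expand, h3, h2]
    ring
  have hA : ∏ k ∈ Finset.range N, (1 + u*q^k) = C * ∏ k ∈ Finset.range N, (1 - (q/x)*q^k) := by
    rw [← Finset.prod_range_reflect (fun k => 1 + u*q^k) N]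
    rw [Finset.prod_congr rfl hAfact, Finset.prod_mul_distrib]
    congr 1
    rw [Finset.prod_mul_distrib, Finset.prod_const, prod_q_zpow hq0 (fun k => -((k:ℤ)+1)), sum_neg_succ, hC]
    simp [Finset.card_range]
  have hsplit : ∏ k ∈ Finset.range (2*N), (1 + u*q^k)
      = (∏ k ∈ Finset.range N, (1 + u*q^k)) * (∏ k ∈ Finset.range N, (1 + u*q^(N+k))) := by
    rw [two_mul, Finset.prod_range_add]
  have hRHS : ∑ j ∈ Finset.range (2*N+1), gb q (2*N) j * q^(j*(j-1)/2) * u^j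
      = C * ∑ j ∈ Finset.range (2*N+1), gb q (2*N) j * trm q x ((j:ℤ) - N) := by
    rw [Finset.mul_sum]
    refine Finset.sum_congr rfl fun j _ => ?_
    have := term_transform hq0 hx N j
    calc gb q (2*N) j * q^(j*(j-1)/2) * u^j
        = gb q (2*N) j * (q^(j*(j-1)/2) * u^j) := by ring
      _ = gb q (2*N) j * (C * trm q x ((j:ℤ) - N)) := by rw [hu, this, hC]
      _ = C * (gb q (2*N) j * trm q x ((j:ℤ) - N)) := by ring
  apply mul_left_cancel₀ hCne
  rw [← hRHS, ← hbin, hsplit, hA]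
  rw [Finset.prod_congr rfl (fun k _ => hB k)]
  ring

-- uniform upper bound for finset products
lemma norm_prod_le_exp (u : ℕ → ℂ) (h : Summable fun i => ‖u i - 1‖) (t : Finset ℕ) :
    ‖∏ i ∈ t, u i‖ ≤ Real.exp (∑' i, ‖u i - 1‖) := by
  have h1 : ‖∏ i ∈ t, u i‖ ≤ ∏ i ∈ t, (1 + ‖u i - 1‖) := by
    have h0 := prod_sub_one_est u t
    have h2 := norm_sub_norm_le (∏ i ∈ t, u i) 1
    simp only [norm_one] at h2
    linarith
  refine h1.trans ((prod_one_add_le_exp _ (fun i => norm_nonneg _) t).trans ?_)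
  exact Real.exp_le_exp.mpr (Summable.sum_le_tsum t (fun i _ => norm_nonneg _) h)

lemma summable_nqpow {q : ℂ} (hq : ‖q‖ < 1) :
    Summable (fun i : ℕ => ‖(1 - q^(i+1)) - 1‖) := by
  have : (fun i : ℕ => ‖(1 - q^(i+1)) - 1‖) = fun i => ‖q‖ * ‖q‖^i := by
    funext i
    rw [show (1 - q^(i+1)) - 1 = -(q^(i+1)) by ring, norm_neg, norm_pow, pow_succ]
    ring
  rw [this]
  exact (summable_geometric_of_lt_one (norm_nonneg q) hq).mul_left _

lemma Qp_ub {q : ℂ} (hq : ‖q‖ < 1) :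
    ∃ C : ℝ, 1 ≤ C ∧ ∀ n, ‖Qp q n‖ ≤ C := by
  refine ⟨max 1 (Real.exp (∑' i, ‖(1 - q^(i+1)) - 1‖)), le_max_left _ _, fun n => ?_⟩
  exact (norm_prod_le_exp _ (summable_nqpow hq) _).trans (le_max_right _ _)

-- lower bound for |∏(1 - v)|
lemma prod_one_sub_norm_le (v : ℕ → ℂ) (t : Finset ℕ) (h : ∀ i ∈ t, ‖v i‖ ≤ 1) :
    ∏ i ∈ t, (1 - ‖v i‖) ≤ ‖∏ i ∈ t, (1 - v i)‖ := by
  classical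
  induction t using Finset.induction with
  | empty => simp
  | insert a t hnotmem ih =>
    rw [Finset.prod_insert hnotmem, Finset.prod_insert hnotmem, norm_mul]
    have ha : ‖v a‖ ≤ 1 := h a (Finset.mem_insert_self a t)
    have ht : ∀ i ∈ t, ‖v i‖ ≤ 1 := fun i hi => h i (Finset.mem_insert_of_mem hi)
    have h1 : 1 - ‖v a‖ ≤ ‖1 - v a‖ := by
      have := norm_sub_norm_le (1 : ℂ) (v a)
      simpa using this
    have h2 := ih ht
    have h3 : (0:ℝ) ≤ ∏ i ∈ t, (1 - ‖v i‖) :=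
      Finset.prod_nonneg (fun i hi => by linarith [ht i hi])
    have h4 : (0:ℝ) ≤ 1 - ‖v a‖ := by linarith
    calc (1 - ‖v a‖) * ∏ i ∈ t, (1 - ‖v i‖)
        ≤ ‖1 - v a‖ * ∏ i ∈ t, (1 - ‖v i‖) := by nlinarith
      _ ≤ ‖1 - v a‖ * ‖∏ i ∈ t, (1 - v i)‖ := by
          have := norm_nonneg (1 - v a); nlinarith

lemma weierstrass_ineq (a : ℕ → ℝ) (t : Finset ℕ) (h : ∀ i ∈ t, 0 ≤ a i ∧ a i ≤ 1) :
    1 - ∑ i ∈ t, a i ≤ ∏ i ∈ t, (1 - a i) := by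
  classical
  induction t using Finset.induction with
  | empty => simp
  | insert c t hnotmem ih =>
    rw [Finset.prod_insert hnotmem, Finset.sum_insert hnotmem]
    have hc := h c (Finset.mem_insert_self c t)
    have ht : ∀ i ∈ t, 0 ≤ a i ∧ a i ≤ 1 := fun i hi => h i (Finset.mem_insert_of_mem hi)
    have h1 := ih ht
    have h2 : ∏ i ∈ t, (1 - a i) ≤ 1 := by
      refine Finset.prod_le_one (fun i hi => by linarith [(ht i hi).1, (ht i hi).2]) ?_
      exact fun i hi => by linarith [(ht i hi).1]
    have hsum : (0:ℝ) ≤ ∑ i ∈ t, a i := Finset.sum_nonneg (fun i hi => (ht i hi).1)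
    nlinarith [hc.1, hc.2]

lemma Qp_lb {q : ℂ} (hq : ‖q‖ < 1) : ∃ c : ℝ, 0 < c ∧ ∀ n, c ≤ ‖Qp q n‖ := by
  set a : ℕ → ℝ := fun j => ‖q‖^(j+1) with ha
  have ha01 : ∀ j, 0 ≤ a j ∧ a j < 1 :=
    fun j => ⟨pow_nonneg (norm_nonneg q) _, pow_lt_one₀ (norm_nonneg q) hq (Nat.succ_ne_zero j)⟩
  have hsuma : Summable a := by
    refine Summable.congr ((summable_geometric_of_lt_one (norm_nonneg q) hq).mul_left ‖q‖) ?_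
    intro j; rw [ha]; show ‖q‖ * ‖q‖^j = ‖q‖^(j+1); rw [pow_succ]; ring
  -- tail small
  obtain ⟨M, hM⟩ : ∃ M, (∑' k, a (k + M)) ≤ 1/2 := by
    have := tendsto_sum_nat_add a
    obtain ⟨M, hM⟩ := (this.eventually (ge_mem_nhds (show (0:ℝ) < 1/2 by norm_num))).exists
    exact ⟨M, hM⟩
  set P : ℝ := ∏ j ∈ Finset.range M, (1 - a j) with hP
  have hPpos : 0 < P := Finset.prod_pos (fun j _ => by linarith [(ha01 j).2])
  refine ⟨P * (1/2), by positivity, fun n => ?_⟩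
  have hbase : ∀ m, ∏ j ∈ Finset.range m, (1 - a j) ≤ ‖Qp q m‖ := by
    intro m
    have : ∀ j ∈ Finset.range m, ‖q^(j+1)‖ ≤ 1 := by
      intro j _; rw [norm_pow]; exact le_of_lt (ha01 j).2
    have h2 := prod_one_sub_norm_le (fun j => q^(j+1)) (Finset.range m) this
    simpa [Qp, ha, norm_pow] using h2
  rcases le_or_gt n M with hnM | hnM
  · -- n ≤ M : P ≤ ∏_{range n}
    have hsplit : P = (∏ j ∈ Finset.range n, (1 - a j)) * ∏ k ∈ Finset.range (M - n), (1 - a (n + k)) := by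
      have h0 := Finset.prod_range_add (fun j => 1 - a j) n (M - n)
      rw [show n + (M - n) = M by omega] at h0
      rw [hP, h0]
    have h2 : ∏ k ∈ Finset.range (M - n), (1 - a (n + k)) ≤ 1 := by
      refine Finset.prod_le_one (fun k _ => by linarith [(ha01 (n+k)).1, (ha01 (n+k)).2]) ?_
      exact fun k _ => by linarith [(ha01 (n+k)).1]
    have h3 : (0:ℝ) ≤ ∏ j ∈ Finset.range n, (1 - a j) :=
      Finset.prod_nonneg (fun j _ => by linarith [(ha01 j).2])
    have h4 : P ≤ ∏ j ∈ Finset.range n, (1 - a j) := by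
      rw [hsplit]; nlinarith
    calc P * (1/2) ≤ P := by linarith
      _ ≤ ∏ j ∈ Finset.range n, (1 - a j) := h4
      _ ≤ ‖Qp q n‖ := hbase n
  · -- n > M
    have hsplit : ∏ j ∈ Finset.range n, (1 - a j)
        = P * ∏ k ∈ Finset.range (n - M), (1 - a (M + k)) := by
      have h0 := Finset.prod_range_add (fun j => 1 - a j) M (n - M)
      rw [show M + (n - M) = n by omega] at h0
      rw [hP, h0]
    have htail : ∑ k ∈ Finset.range (n - M), a (M + k) ≤ 1/2 := by
      refine le_trans ?_ hM
      have hcomm : ∀ k, a (M + k) = a (k + M) := fun k => by rw [Nat.add_comm]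
      calc ∑ k ∈ Finset.range (n - M), a (M + k)
          = ∑ k ∈ Finset.range (n - M), a (k + M) := Finset.sum_congr rfl (fun k _ => hcomm k)
        _ ≤ ∑' k, a (k + M) := Summable.sum_le_tsum _ (fun k _ => (ha01 _).1)
            ((summable_nat_add_iff M).mpr hsuma)
    have hw : 1 - ∑ k ∈ Finset.range (n - M), a (M + k)
        ≤ ∏ k ∈ Finset.range (n - M), (1 - a (M + k)) := by
      refine weierstrass_ineq _ _ (fun k _ => ⟨(ha01 _).1, le_of_lt (ha01 _).2⟩)
    have h5 : (1:ℝ)/2 ≤ ∏ k ∈ Finset.range (n - M), (1 - a (M + k)) := by linarith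
    calc P * (1/2) ≤ P * ∏ k ∈ Finset.range (n - M), (1 - a (M + k)) := by nlinarith
      _ = ∏ j ∈ Finset.range n, (1 - a j) := hsplit.symm
      _ ≤ ‖Qp q n‖ := hbase n

lemma tendsto_qPoch {q : ℂ} (hq : ‖q‖ < 1) (z : ℂ) :
    Tendsto (fun n => ∏ k ∈ Finset.range n, (1 - z*q^k)) atTop (𝓝 (qPoch z q)) := by
  have hsum : Summable (fun i : ℕ => ‖(1 - z*q^i) - 1‖) := by
    have : (fun i : ℕ => ‖(1 - z*q^i) - 1‖) = fun i => ‖z‖ * ‖q‖^i := by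
      funext i
      rw [show (1 - z*q^i) - 1 = -(z * q^i) by ring, norm_neg, norm_mul, norm_pow]
    rw [this]
    exact (summable_geometric_of_lt_one (norm_nonneg q) hq).mul_left _
  exact (multipliable_of_summable_sub_one hsum).hasProd.tendsto_prod_nat

lemma tendsto_Qp {q : ℂ} (hq : ‖q‖ < 1) :
    Tendsto (fun n => Qp q n) atTop (𝓝 (qPoch q q)) := by
  have h := tendsto_qPoch hq q
  have : ∀ n, ∏ k ∈ Finset.range n, (1 - q*q^k) = Qp q n := by
    intro n
    exact Finset.prod_congr rfl fun k _ => by rw [pow_succ q k]; ring_nf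
  simpa [funext this] using h

lemma qPoch_q_ne_zero {q : ℂ} (hq : ‖q‖ < 1) : qPoch q q ≠ 0 := by
  obtain ⟨c, hc0, hc⟩ := Qp_lb hq
  have hlim : Tendsto (fun n => ‖Qp q n‖) atTop (𝓝 ‖qPoch q q‖) :=
    (continuous_norm.continuousAt.tendsto).comp (tendsto_Qp hq)
  have : c ≤ ‖qPoch q q‖ := ge_of_tendsto' hlim (fun n => hc n)
  intro h
  rw [h, norm_zero] at this
  linarith

-- summability of theta terms
lemma trm_succ {p z : ℂ} (hp : p ≠ 0) (hz : z ≠ 0) (m : ℤ) :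
    trm p z (m+1) = trm p z m * (-(z * p^m)) := by
  have h1 : (-1:ℂ)^(m+1) = (-1:ℂ)^m * (-1) := by
    rw [zpow_add₀ (by norm_num : (-1:ℂ) ≠ 0), zpow_one]
  have h2 : z^(m+1) = z^m * z := by rw [zpow_add₀ hz, zpow_one]
  have heZ : eZ (m+1) = eZ m + m := by
    have d1 := two_eZ (m+1)
    have d2 := two_eZ m
    have hr : (m+1)*(m+1-1) = m*(m-1) + 2*m := by ring
    linarith
  have h3 : p^(eZ (m+1)) = p^(eZ m) * p^m := by rw [heZ, zpow_add₀ hp]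
  rw [trm, trm, h1, h2, h3]
  ring

lemma norm_trm {p z : ℂ} (m : ℤ) : ‖trm p z m‖ = ‖z‖^m * ‖p‖^(eZ m) := by
  rw [trm, norm_mul, norm_mul, norm_zpow, norm_zpow, norm_zpow]
  simp

lemma summable_norm_trm {p z : ℂ} (hp0 : p ≠ 0) (hp : ‖p‖ < 1) (hz : z ≠ 0) :
    Summable (fun m : ℤ => ‖trm p z m‖) := by
  have hz' : (0:ℝ) < ‖z‖ := norm_pos_iff.mpr hz
  have hp' : (0:ℝ) ≤ ‖p‖ := norm_nonneg p
  have htz : Tendsto (fun n : ℕ => ‖z‖ * ‖p‖^n) atTop (𝓝 0) := by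
    simpa using (tendsto_pow_atTop_nhds_zero_of_lt_one hp' hp).const_mul ‖z‖
  have htz2 : Tendsto (fun n : ℕ => ‖p‖^(n+1) / ‖z‖) atTop (𝓝 0) := by
    have := ((tendsto_pow_atTop_nhds_zero_of_lt_one hp' hp).comp (tendsto_add_atTop_nat 1)).div_const ‖z‖
    simpa using this
  apply Summable.of_nat_of_neg
  · -- positive side
    apply summable_of_ratio_norm_eventually_le (r := 1/2) (by norm_num)
    have hev : ∀ᶠ n : ℕ in atTop, ‖z‖ * ‖p‖^n ≤ 1/2 :=
      htz.eventually (ge_mem_nhds (show (0:ℝ) < 1/2 by norm_num))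
    filter_upwards [hev] with n hn
    have hstep : ‖trm p z ((n:ℤ)+1)‖ = ‖trm p z (n:ℤ)‖ * (‖z‖ * ‖p‖^n) := by
      rw [trm_succ hp0 hz, norm_mul, norm_neg, norm_mul, norm_zpow, zpow_natCast]
    have hpos : (0:ℝ) ≤ ‖trm p z (n:ℤ)‖ := norm_nonneg _
    have : ((n:ℤ)+1) = ((n+1 : ℕ) : ℤ) := by push_cast; ring
    rw [← this]
    rw [Real.norm_of_nonneg (norm_nonneg _), Real.norm_of_nonneg (norm_nonneg _), hstep]
    nlinarith
  · -- negative side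
    apply summable_of_ratio_norm_eventually_le (r := 1/2) (by norm_num)
    have hev : ∀ᶠ n : ℕ in atTop, ‖p‖^(n+1) / ‖z‖ ≤ 1/2 :=
      htz2.eventually (ge_mem_nhds (show (0:ℝ) < 1/2 by norm_num))
    filter_upwards [hev] with n hn
    have hstep0 : trm p z (-(n:ℤ)) = trm p z (-((n:ℤ)+1)) * (-(z * p^(-((n:ℤ)+1)))) := by
      have := trm_succ hp0 hz (-((n:ℤ)+1))
      simpa [show -((n:ℤ)+1) + 1 = -(n:ℤ) by ring] using this
    have hstep : ‖trm p z (-(n:ℤ))‖ = ‖trm p z (-((n:ℤ)+1))‖ * (‖z‖ * ‖p‖^(-((n:ℤ)+1))) := by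
      rw [hstep0, norm_mul, norm_neg, norm_mul, norm_zpow]
    have hppos : (0:ℝ) < ‖p‖ := norm_pos_iff.mpr hp0
    have hq1 : ‖p‖^(-((n:ℤ)+1)) = (‖p‖^(n+1))⁻¹ := by
      rw [zpow_neg]
      norm_cast
    have heq : ‖trm p z (-((n:ℤ)+1))‖ = ‖trm p z (-(n:ℤ))‖ * (‖p‖^(n+1) / ‖z‖) := by
      have h1 : ‖p‖^(n+1) ≠ 0 := by positivity
      have h2 : ‖z‖ ≠ 0 := ne_of_gt hz'
      rw [hq1] at hstep
      rw [hstep, mul_assoc]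
      have hpne : ‖p‖ ≠ 0 := ne_of_gt hppos
      have h3 : (‖z‖ * (‖p‖^(n+1))⁻¹) * (‖p‖^(n+1) / ‖z‖) = 1 := by
        rw [div_eq_mul_inv, mul_comm ‖z‖ (‖p‖^(n+1))⁻¹, mul_mul_mul_comm,
          inv_mul_cancel₀ h1, mul_inv_cancel₀ h2, one_mul]
      rw [h3, mul_one]
    have : (-(↑(n+1) : ℤ)) = -((n:ℤ)+1) := by push_cast; ring
    rw [this]
    rw [Real.norm_of_nonneg (norm_nonneg _), Real.norm_of_nonneg (norm_nonneg _), heq]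
    nlinarith [norm_nonneg (trm p z (-(n:ℤ)))]

lemma jtp {q x : ℂ} (hq0 : q ≠ 0) (hq : ‖q‖ < 1) (hx : x ≠ 0) :
    jP x q = ∑' m : ℤ, trm q x m := by
  obtain ⟨C, hC1, hCub⟩ := Qp_ub hq
  obtain ⟨c, hc0, hclb⟩ := Qp_lb hq
  have hPne : qPoch q q ≠ 0 := qPoch_q_ne_zero hq
  set K : ℝ := C / (c*c) with hK
  have hK0 : 0 < K := by positivity
  have hgb_bound : ∀ n k, ‖gb q n k‖ ≤ K := by
    intro n k
    by_cases hk : k ≤ n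
    · rw [gb, if_pos hk, norm_div, norm_mul]
      exact div_le_div₀ (by linarith) (hCub n) (by nlinarith)
        (mul_le_mul (hclb k) (hclb (n-k)) (le_of_lt hc0) (le_trans (le_of_lt hc0) (hclb k)))
    · rw [gb, if_neg hk, norm_zero]; positivity
  have hS : Summable (fun m : ℤ => ‖trm q x m‖) := summable_norm_trm hq0 hq hx
  have hSb : Summable (fun m : ℤ => K * ‖trm q x m‖) := hS.mul_left K
  set F : ℕ → ℤ → ℂ :=
    fun N m => if m.natAbs ≤ N then gb q (2*N) ((m + N).toNat) * trm q x m else 0 with hF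
  have h_bound : ∀ N m, ‖F N m‖ ≤ K * ‖trm q x m‖ := by
    intro N m
    rw [hF]
    by_cases h : m.natAbs ≤ N
    · simp only [if_pos h, norm_mul]
      exact mul_le_mul_of_nonneg_right (hgb_bound _ _) (norm_nonneg _)
    · simp only [if_neg h, norm_zero]
      positivity
  have h_lim : ∀ m : ℤ, Tendsto (fun N => F N m) atTop (𝓝 ((qPoch q q)⁻¹ * trm q x m)) := by
    intro m
    have hQp := tendsto_Qp hq
    have t1 : Tendsto (fun N : ℕ => 2*N) atTop atTop :=
      tendsto_atTop_atTop.mpr (fun b => ⟨b, fun a ha => by omega⟩)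
    have t2 : Tendsto (fun N : ℕ => ((m + N : ℤ)).toNat) atTop atTop :=
      tendsto_atTop_atTop.mpr (fun b => ⟨b + m.natAbs, fun a ha => by omega⟩)
    have t3 : Tendsto (fun N : ℕ => 2*N - ((m + N : ℤ)).toNat) atTop atTop :=
      tendsto_atTop_atTop.mpr (fun b => ⟨b + m.natAbs, fun a ha => by omega⟩)
    have hG : Tendsto (fun N : ℕ => Qp q (2*N) / (Qp q ((m + N : ℤ)).toNat
        * Qp q (2*N - ((m + N : ℤ)).toNat))) atTop
        (𝓝 (qPoch q q / (qPoch q q * qPoch q q))) :=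
      (hQp.comp t1).div ((hQp.comp t2).mul (hQp.comp t3)) (mul_ne_zero hPne hPne)
    have hval : qPoch q q / (qPoch q q * qPoch q q) = (qPoch q q)⁻¹ := by
      field_simp
    rw [hval] at hG
    have hGmul := hG.mul_const (trm q x m)
    refine Tendsto.congr' ?_ hGmul
    filter_upwards [eventually_ge_atTop m.natAbs] with N hN
    have hmN : m.natAbs ≤ N := hN
    have hk2 : ((m + N : ℤ)).toNat ≤ 2*N := by omega
    rw [hF]
    simp only [if_pos hmN]
    rw [gb, if_pos hk2]
  have hDCT := tendsto_tsum_of_dominated_convergence hSb h_lim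
    (Filter.Eventually.of_forall h_bound)
  have hfin : ∀ N, (∑' m : ℤ, F N m)
      = (∏ k ∈ Finset.range N, (1 - (q/x) * q^k)) * (∏ k ∈ Finset.range N, (1 - x*q^k)) := by
    intro N
    rw [finite_jtp hq0 hq hx N]
    have hvanish : ∀ m : ℤ, m ∉ Finset.Icc (-(N:ℤ)) (N:ℤ) → F N m = 0 := by
      intro m hm
      simp only [Finset.mem_Icc] at hm
      rw [hF]
      have : ¬ (m.natAbs ≤ N) := by omega
      simp [this]
    rw [tsum_eq_sum hvanish]
    refine Finset.sum_bij' (fun m _ => ((m + N : ℤ)).toNat) (fun j _ => (j:ℤ) - N)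
      ?_ ?_ ?_ ?_ ?_
    · intro m hm
      simp only [Finset.mem_Icc] at hm
      simp only [Finset.mem_range]
      omega
    · intro j hj
      simp only [Finset.mem_range] at hj
      simp only [Finset.mem_Icc]
      omega
    · intro m hm
      simp only [Finset.mem_Icc] at hm
      omega
    · intro j hj
      simp only [Finset.mem_range] at hj
      omega
    · intro m hm
      simp only [Finset.mem_Icc] at hm
      rw [hF]
      have h1 : m.natAbs ≤ N := by omega
      simp only [if_pos h1]
      have h2 : ((((m + N : ℤ)).toNat : ℤ)) - N = m := by omega
      rw [h2]
  have hprod : Tendsto (fun N => (∏ k ∈ Finset.range N, (1 - (q/x) * q^k))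
      * (∏ k ∈ Finset.range N, (1 - x*q^k))) atTop
      (𝓝 (qPoch (q/x) q * qPoch x q)) :=
    (tendsto_qPoch hq (q/x)).mul (tendsto_qPoch hq x)
  have hmain : qPoch (q/x) q * qPoch x q = ∑' m : ℤ, (qPoch q q)⁻¹ * trm q x m := by
    refine tendsto_nhds_unique ?_ hDCT
    refine Tendsto.congr' ?_ hprod
    exact Filter.Eventually.of_forall (fun N => (hfin N).symm)
  rw [tsum_mul_left] at hmain
  rw [jP]
  calc qPoch x q * qPoch (q/x) q * qPoch q q
      = (qPoch (q/x) q * qPoch x q) * qPoch q q := by ring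
    _ = ((qPoch q q)⁻¹ * ∑' m : ℤ, trm q x m) * qPoch q q := by rw [hmain]
    _ = ∑' m : ℤ, trm q x m := by field_simp

lemma eZ_even_id (a b : ℤ) : eZ (a-b) + eZ (a+b) = 2*eZ a + (b + 2*eZ b) := by
  have d1 := two_eZ (a-b)
  have d2 := two_eZ (a+b)
  have d3 := two_eZ a
  have d4 := two_eZ b
  have hr : (a-b)*((a-b)-1) + (a+b)*((a+b)-1) = 2*(a*(a-1)) + 2*b + 2*(b*(b-1)) := by ring
  linarith

lemma eZ_odd_id (a b : ℤ) : eZ (a-b+1) + eZ (a+b) = a + (2*eZ a + 2*eZ b) := by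
  have d1 := two_eZ (a-b+1)
  have d2 := two_eZ (a+b)
  have d3 := two_eZ a
  have d4 := two_eZ b
  have hr : (a-b+1)*((a-b+1)-1) + (a+b)*((a+b)-1) = 2*a + 2*(a*(a-1)) + 2*(b*(b-1)) := by ring
  linarith

lemma key_even {q x y : ℂ} (hq0 : q ≠ 0) (hx : x ≠ 0) (hy : y ≠ 0) (a b : ℤ) :
    trm q x (a - b) * trm q y (a + b)
      = trm (q^2) (-(x*y)) a * trm (q^2) (-(q*x⁻¹*y)) b := by
  have hm1 : (-1:ℂ) ≠ 0 := by norm_num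
  have h2a : ((-1:ℂ))^(2*a) = 1 := by
    rw [zpow_mul, show ((-1:ℂ))^(2:ℤ) = 1 by norm_num, one_zpow]
  have h2b : ((-1:ℂ))^(2*b) = 1 := by
    rw [zpow_mul, show ((-1:ℂ))^(2:ℤ) = 1 by norm_num, one_zpow]
  have hbase : (q^2 : ℂ) = q^((2:ℤ)) := by norm_cast
  have hq2pow : ∀ n : ℤ, ((q^2 : ℂ))^n = q^(2*n) := by
    intro n; rw [hbase, ← zpow_mul]
  have lhs_eq : trm q x (a - b) * trm q y (a + b)
      = x^(a-b) * y^(a+b) * q^(2*eZ a + (b + 2*eZ b)) := by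
    calc trm q x (a - b) * trm q y (a + b)
        = ((-1:ℂ)^(a-b) * (-1:ℂ)^(a+b)) * x^(a-b) * y^(a+b)
            * (q^(eZ (a-b)) * q^(eZ (a+b))) := by rw [trm, trm]; ring
      _ = (-1:ℂ)^(2*a) * x^(a-b) * y^(a+b) * q^(eZ (a-b) + eZ (a+b)) := by
          rw [← zpow_add₀ hm1, ← zpow_add₀ hq0, show (a-b)+(a+b) = 2*a by ring]
      _ = x^(a-b) * y^(a+b) * q^(2*eZ a + (b + 2*eZ b)) := by
          rw [h2a, eZ_even_id]; ring
  have rhs_eq : trm (q^2) (-(x*y)) a * trm (q^2) (-(q*x⁻¹*y)) b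
      = x^(a-b) * y^(a+b) * q^(2*eZ a + (b + 2*eZ b)) := by
    calc trm (q^2) (-(x*y)) a * trm (q^2) (-(q*x⁻¹*y)) b
        = ((-1:ℂ)^a * ((-1) * (x*y))^a * (q^2:ℂ)^(eZ a))
            * ((-1:ℂ)^b * ((-1) * (q*(x⁻¹*y)))^b * (q^2:ℂ)^(eZ b)) := by
          rw [trm, trm, show -(x*y) = (-1) * (x*y) by ring,
            show -(q*x⁻¹*y) = (-1) * (q*(x⁻¹*y)) by ring]
      _ = ((-1:ℂ)^a * (-1:ℂ)^a) * ((-1:ℂ)^b * (-1:ℂ)^b) * (x^a * x^(-b)) * (y^a * y^b)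
            * (q^(2*eZ a) * (q^b * q^(2*eZ b))) := by
          simp only [mul_zpow, inv_zpow', hq2pow]
          ring
      _ = (-1:ℂ)^(2*a) * (-1:ℂ)^(2*b) * x^(a + -b) * y^(a+b)
            * q^(2*eZ a + (b + 2*eZ b)) := by
          rw [← zpow_add₀ hm1, ← zpow_add₀ hm1, ← zpow_add₀ hx, ← zpow_add₀ hy,
            ← zpow_add₀ hq0, ← zpow_add₀ hq0, show a+a = 2*a by ring, show b+b = 2*b by ring]
      _ = x^(a-b) * y^(a+b) * q^(2*eZ a + (b + 2*eZ b)) := by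
          rw [h2a, h2b, show a + -b = a - b by ring]; ring
  rw [lhs_eq, rhs_eq]

lemma key_odd {q x y : ℂ} (hq0 : q ≠ 0) (hx : x ≠ 0) (hy : y ≠ 0) (a b : ℤ) :
    trm q x (a - b + 1) * trm q y (a + b)
      = (-x) * (trm (q^2) (-(x*y*q)) a * trm (q^2) (-(x⁻¹*y)) b) := by
  have hm1 : (-1:ℂ) ≠ 0 := by norm_num
  have h2a : ((-1:ℂ))^(2*a) = 1 := by
    rw [zpow_mul, show ((-1:ℂ))^(2:ℤ) = 1 by norm_num, one_zpow]
  have h2b : ((-1:ℂ))^(2*b) = 1 := by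
    rw [zpow_mul, show ((-1:ℂ))^(2:ℤ) = 1 by norm_num, one_zpow]
  have hodd1 : ((-1:ℂ))^(2*a+1) = -1 := by
    rw [zpow_add₀ hm1, h2a, zpow_one, one_mul]
  have hbase : (q^2 : ℂ) = q^((2:ℤ)) := by norm_cast
  have hq2pow : ∀ n : ℤ, ((q^2 : ℂ))^n = q^(2*n) := by
    intro n; rw [hbase, ← zpow_mul]
  have lhs_eq : trm q x (a - b + 1) * trm q y (a + b)
      = -(x^(a-b) * x * y^(a+b) * q^(a + (2*eZ a + 2*eZ b))) := by
    calc trm q x (a - b + 1) * trm q y (a + b)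
        = ((-1:ℂ)^(a-b+1) * (-1:ℂ)^(a+b)) * x^(a-b+1) * y^(a+b)
            * (q^(eZ (a-b+1)) * q^(eZ (a+b))) := by rw [trm, trm]; ring
      _ = (-1:ℂ)^(2*a+1) * (x^(a-b) * x) * y^(a+b) * q^(eZ (a-b+1) + eZ (a+b)) := by
          rw [← zpow_add₀ hm1, ← zpow_add₀ hq0, show (a-b+1)+(a+b) = 2*a+1 by ring,
            zpow_add₀ hx, zpow_one]
      _ = -(x^(a-b) * x * y^(a+b) * q^(a + (2*eZ a + 2*eZ b))) := by
          rw [hodd1, eZ_odd_id]; ring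
  have rhs_eq : (-x) * (trm (q^2) (-(x*y*q)) a * trm (q^2) (-(x⁻¹*y)) b)
      = -(x^(a-b) * x * y^(a+b) * q^(a + (2*eZ a + 2*eZ b))) := by
    calc (-x) * (trm (q^2) (-(x*y*q)) a * trm (q^2) (-(x⁻¹*y)) b)
        = (-x) * (((-1:ℂ)^a * ((-1) * (x*(y*q)))^a * (q^2:ℂ)^(eZ a))
            * ((-1:ℂ)^b * ((-1) * (x⁻¹*y))^b * (q^2:ℂ)^(eZ b))) := by
          rw [trm, trm, show -(x*y*q) = (-1) * (x*(y*q)) by ring,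
            show -(x⁻¹*y) = (-1) * (x⁻¹*y) by ring]
      _ = (-x) * (((-1:ℂ)^a * (-1:ℂ)^a) * ((-1:ℂ)^b * (-1:ℂ)^b) * (x^a * x^(-b))
            * (y^a * y^b) * (q^(2*eZ a) * (q^a * q^(2*eZ b)))) := by
          simp only [mul_zpow, inv_zpow', hq2pow]
          ring
      _ = (-x) * ((-1:ℂ)^(2*a) * (-1:ℂ)^(2*b) * x^(a + -b) * y^(a+b)
            * q^(a + (2*eZ a + 2*eZ b))) := by
          rw [← zpow_add₀ hm1, ← zpow_add₀ hm1, ← zpow_add₀ hx, ← zpow_add₀ hy,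
            ← zpow_add₀ hq0, ← zpow_add₀ hq0, show a+a = 2*a by ring, show b+b = 2*b by ring]
          ring_nf
      _ = -(x^(a-b) * x * y^(a+b) * q^(a + (2*eZ a + 2*eZ b))) := by
          rw [h2a, h2b, show a + -b = a - b by ring]; ring
  rw [lhs_eq, rhs_eq]

def parEquiv : Bool × (ℤ × ℤ) ≃ ℤ × ℤ where
  toFun c := (c.2.1 - c.2.2 + (cond c.1 1 0), c.2.1 + c.2.2)
  invFun p :=
    if Even (p.1 + p.2) then (false, ((p.1 + p.2)/2, (p.2 - p.1)/2))
    else (true, ((p.1 + p.2 - 1)/2, (p.2 - p.1 + 1)/2))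
  left_inv := by
    rintro ⟨u, a, b⟩
    cases u
    · simp only [cond_false, add_zero]
      have hev : Even ((a - b) + (a + b)) := ⟨a, by ring⟩
      rw [if_pos hev]
      simp only [Prod.mk.injEq]
      refine ⟨trivial, ?_, ?_⟩ <;> omega
    · simp only [cond_true]
      have hodd : ¬ Even ((a - b + 1) + (a + b)) := by
        rw [Int.even_iff]; omega
      rw [if_neg hodd]
      simp only [Prod.mk.injEq]
      refine ⟨trivial, ?_, ?_⟩ <;> omega
  right_inv := by
    rintro ⟨n, m⟩
    by_cases h : Even (n + m)
    · show (fun c : Bool × (ℤ × ℤ) => ((c.2.1 - c.2.2 + (cond c.1 1 0), c.2.1 + c.2.2) : ℤ × ℤ))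
          (if Even (n + m) then ((false, ((n + m)/2, (m - n)/2)) : Bool × (ℤ × ℤ))
           else (true, ((n + m - 1)/2, (m - n + 1)/2))) = (n, m)
      rw [if_pos h]
      simp only [cond_false, add_zero, Prod.mk.injEq]
      obtain ⟨k, hk⟩ := h
      constructor <;> omega
    · show (fun c : Bool × (ℤ × ℤ) => ((c.2.1 - c.2.2 + (cond c.1 1 0), c.2.1 + c.2.2) : ℤ × ℤ))
          (if Even (n + m) then ((false, ((n + m)/2, (m - n)/2)) : Bool × (ℤ × ℤ))
           else (true, ((n + m - 1)/2, (m - n + 1)/2))) = (n, m)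
      rw [if_neg h]
      simp only [cond_true, Prod.mk.injEq]
      rw [Int.even_iff] at h
      constructor <;> omega

lemma theta_split {q x y : ℂ} (hq0 : q ≠ 0) (hq : ‖q‖ < 1) (hx : x ≠ 0) (hy : y ≠ 0) :
    (∑' n : ℤ, trm q x n) * (∑' n : ℤ, trm q y n)
      = (∑' n : ℤ, trm (q^2) (-(x*y)) n) * (∑' n : ℤ, trm (q^2) (-(q*x⁻¹*y)) n)
        - x * (∑' n : ℤ, trm (q^2) (-(x*y*q)) n) * (∑' n : ℤ, trm (q^2) (-(x⁻¹*y)) n) := by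
  have hq20 : (q^2 : ℂ) ≠ 0 := pow_ne_zero 2 hq0
  have hq2 : ‖(q^2 : ℂ)‖ < 1 := by
    rw [norm_pow]; exact pow_lt_one₀ (norm_nonneg q) hq two_ne_zero
  have hz1 : -(x*y) ≠ 0 := neg_ne_zero.mpr (mul_ne_zero hx hy)
  have hz2 : -(q*x⁻¹*y) ≠ 0 :=
    neg_ne_zero.mpr (mul_ne_zero (mul_ne_zero hq0 (inv_ne_zero hx)) hy)
  have hz3 : -(x*y*q) ≠ 0 := neg_ne_zero.mpr (mul_ne_zero (mul_ne_zero hx hy) hq0)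
  have hz4 : -(x⁻¹*y) ≠ 0 := neg_ne_zero.mpr (mul_ne_zero (inv_ne_zero hx) hy)
  have Sx := summable_norm_trm hq0 hq hx
  have Sy := summable_norm_trm hq0 hq hy
  have S1 := summable_norm_trm hq20 hq2 hz1
  have S2 := summable_norm_trm hq20 hq2 hz2
  have S3 := summable_norm_trm hq20 hq2 hz3
  have S4 := summable_norm_trm hq20 hq2 hz4
  set G : ℤ × ℤ → ℂ := fun p => trm q x p.1 * trm q y p.2 with hG
  have hGsum : Summable G := summable_mul_of_summable_norm Sx Sy
  have hL : (∑' n : ℤ, trm q x n) * (∑' n : ℤ, trm q y n) = ∑' p : ℤ × ℤ, G p :=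
    tsum_mul_tsum_of_summable_norm Sx Sy
  have hEs : Summable (G ∘ parEquiv) := (parEquiv.summable_iff (f := G)).mpr hGsum
  have hEq : ∑' c : Bool × (ℤ × ℤ), G (parEquiv c) = ∑' p : ℤ × ℤ, G p :=
    parEquiv.tsum_eq G
  have hProd : ∑' c : Bool × (ℤ × ℤ), G (parEquiv c)
      = (∑' p : ℤ × ℤ, G (parEquiv (false, p))) + ∑' p : ℤ × ℤ, G (parEquiv (true, p)) := by
    rw [show (fun c : Bool × (ℤ × ℤ) => G (parEquiv c)) = G ∘ parEquiv from rfl]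
    rw [Summable.tsum_prod' hEs (fun b => hEs.prod_factor b)]
    rw [tsum_bool]
    rfl
  have hEven : ∑' p : ℤ × ℤ, G (parEquiv (false, p))
      = (∑' n : ℤ, trm (q^2) (-(x*y)) n) * (∑' n : ℤ, trm (q^2) (-(q*x⁻¹*y)) n) := by
    rw [tsum_mul_tsum_of_summable_norm S1 S2]
    refine tsum_congr fun p => ?_
    obtain ⟨a, b⟩ := p
    show trm q x (a - b + cond false 1 0) * trm q y (a + b) = _
    rw [cond_false, add_zero]
    exact key_even hq0 hx hy a b
  have hOdd : ∑' p : ℤ × ℤ, G (parEquiv (true, p))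
      = (-x) * ((∑' n : ℤ, trm (q^2) (-(x*y*q)) n) * (∑' n : ℤ, trm (q^2) (-(x⁻¹*y)) n)) := by
    have hstep : ∀ p : ℤ × ℤ, G (parEquiv (true, p))
        = (-x) * (trm (q^2) (-(x*y*q)) p.1 * trm (q^2) (-(x⁻¹*y)) p.2) := by
      rintro ⟨a, b⟩
      show trm q x (a - b + cond true 1 0) * trm q y (a + b) = _
      rw [cond_true]
      exact key_odd hq0 hx hy a b
    calc ∑' p : ℤ × ℤ, G (parEquiv (true, p))
        = ∑' p : ℤ × ℤ, (-x) * (trm (q^2) (-(x*y*q)) p.1 * trm (q^2) (-(x⁻¹*y)) p.2) :=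
          tsum_congr hstep
      _ = (-x) * ∑' p : ℤ × ℤ, trm (q^2) (-(x*y*q)) p.1 * trm (q^2) (-(x⁻¹*y)) p.2 :=
          tsum_mul_left
      _ = (-x) * ((∑' n : ℤ, trm (q^2) (-(x*y*q)) n) * (∑' n : ℤ, trm (q^2) (-(x⁻¹*y)) n)) := by
          rw [tsum_mul_tsum_of_summable_norm S3 S4]
  rw [hL, ← hEq, hProd, hEven, hOdd]
  ring

theorem jP_splitting (q x y : ℂ) (hq0 : q ≠ 0) (hq : ‖q‖ < 1)
    (hx : x ≠ 0) (hy : y ≠ 0) :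
    jP x q * jP y q =
      jP (-(x * y)) (q ^ 2) * jP (-(q * x⁻¹ * y)) (q ^ 2) -
        x * jP (-(x * y * q)) (q ^ 2) * jP (-(x⁻¹ * y)) (q ^ 2) := by
  have hq20 : (q^2 : ℂ) ≠ 0 := pow_ne_zero 2 hq0
  have hq2 : ‖(q^2 : ℂ)‖ < 1 := by
    rw [norm_pow]; exact pow_lt_one₀ (norm_nonneg q) hq two_ne_zero
  have hz1 : -(x*y) ≠ 0 := neg_ne_zero.mpr (mul_ne_zero hx hy)
  have hz2 : -(q*x⁻¹*y) ≠ 0 :=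
    neg_ne_zero.mpr (mul_ne_zero (mul_ne_zero hq0 (inv_ne_zero hx)) hy)
  have hz3 : -(x*y*q) ≠ 0 := neg_ne_zero.mpr (mul_ne_zero (mul_ne_zero hx hy) hq0)
  have hz4 : -(x⁻¹*y) ≠ 0 := neg_ne_zero.mpr (mul_ne_zero (inv_ne_zero hx) hy)
  rw [jtp hq0 hq hx, jtp hq0 hq hy, jtp hq20 hq2 hz1, jtp hq20 hq2 hz2,
    jtp hq20 hq2 hz3, jtp hq20 hq2 hz4]
  exact theta_split hq0 hq hx hy
end

section
/- Let q ∈ ℂ with 0 < |q| < 1. Define the Appell–Lerch series m(x,q,z) := (1/j(z;q)) · Σ_{r ∈ ℤ} (-1)^r q^{r(r-1)/2} z^r / (1 - q^{r-1} x z), for x, z ∈ ℂ* with neither z nor xz an integral power of q. Then m(x,q,z) = x⁻¹ · m(x⁻¹, q, z⁻¹). -/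
noncomputable def mAL (x q z : ℂ) : ℂ :=
  (1 / jP z q) * ∑' r : ℤ, ((-1 : ℂ) ^ r * q ^ (r * (r - 1) / 2) * z ^ r) /
    (1 - q ^ (r - 1) * x * z)

lemma summable_log_aux (x q : ℂ) (hq : ‖q‖ < 1) :
    Summable (fun k : ℕ => Complex.log (1 - x * q ^ k)) := by
  have hgeo : Summable (fun k : ℕ => (3/2) * (‖x‖ * ‖q‖ ^ k)) :=
    ((summable_geometric_of_lt_one (norm_nonneg q) hq).mul_left ‖x‖).mul_left _
  apply Summable.of_norm_bounded_eventually hgeo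
  have ht : Filter.Tendsto (fun k : ℕ => ‖x‖ * ‖q‖ ^ k) Filter.atTop (nhds 0) := by
    simpa using (tendsto_pow_atTop_nhds_zero_of_lt_one (norm_nonneg q) hq).const_mul ‖x‖
  have hev : ∀ᶠ k : ℕ in Filter.atTop, ‖x‖ * ‖q‖ ^ k ≤ 1/2 := by
    exact ht.eventually_le_const (show (0:ℝ) < 1/2 by norm_num)
  rw [Nat.cofinite_eq_atTop]
  filter_upwards [hev] with k hk
  have hnorm : ‖-(x * q ^ k)‖ ≤ 1/2 := by
    rw [norm_neg, norm_mul, norm_pow]; exact hk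
  have h2 := Complex.norm_log_one_add_half_le_self hnorm
  rw [show (1:ℂ) - x * q ^ k = 1 + -(x * q ^ k) from by ring]
  exact h2.trans_eq (by simp [norm_mul, norm_pow])

lemma multipliable_qPoch (x q : ℂ) (hq : ‖q‖ < 1) (h : ∀ k : ℕ, 1 - x * q ^ k ≠ 0) :
    Multipliable (fun k : ℕ => 1 - x * q ^ k) := by
  exact Complex.multipliable_of_summable_log (summable_log_aux x q hq)

lemma qPoch_peel (x q : ℂ) (hq : ‖q‖ < 1) (h : ∀ k : ℕ, 1 - x * q ^ k ≠ 0) :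
    qPoch x q = (1 - x) * qPoch (x * q) q := by
  have hm : Multipliable (fun k : ℕ => (1 - x * q ^ (k + 1))) := by
    have := multipliable_qPoch (x * q) q hq (fun k => by
      have := h (k + 1); rw [pow_succ] at this
      simpa [mul_comm, mul_assoc, mul_left_comm] using this)
    apply this.congr
    intro k
    rw [pow_succ]; ring
  have := tprod_eq_zero_mul' (f := fun k : ℕ => 1 - x * q ^ k) hm
  rw [qPoch, this, qPoch]
  simp only [pow_zero, mul_one]
  congr 1
  apply tprod_congr
  intro k
  rw [pow_succ]; ring

lemma jP_inv (z q : ℂ) (hq : ‖q‖ < 1) (hq0 : q ≠ 0) (hz : z ≠ 0)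
    (hz' : ∀ k : ℤ, z ≠ q ^ k) : jP z⁻¹ q = -z⁻¹ * jP z q := by
  have hinv : ∀ k : ℕ, 1 - z⁻¹ * q ^ k ≠ 0 := by
    intro k hk
    have h1 : z⁻¹ * q ^ k = 1 := by linear_combination -hk
    have h2 : q ^ k = z := by field_simp at h1; exact h1
    exact hz' k (by rw [zpow_natCast]; exact h2.symm)
  have hzk : ∀ k : ℕ, 1 - z * q ^ k ≠ 0 := by
    intro k hk
    have h1 : z * q ^ k = 1 := by linear_combination -hk
    have h2 : z = (q ^ k)⁻¹ :=
      (inv_eq_of_mul_eq_one_right (by rw [mul_comm]; exact h1)).symm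
    exact hz' (-(k : ℤ)) (by rw [zpow_neg, zpow_natCast]; exact h2)
  have e1 : qPoch z⁻¹ q = (1 - z⁻¹) * qPoch (q / z) q := by
    rw [qPoch_peel z⁻¹ q hq hinv, div_eq_mul_inv, mul_comm q z⁻¹]
  have e2 : qPoch z q = (1 - z) * qPoch (q * z) q := by
    rw [qPoch_peel z q hq hzk, mul_comm z q]
  have e3 : q / z⁻¹ = q * z := by rw [div_eq_mul_inv, inv_inv]
  rw [jP, jP, e1, e2, e3]
  have : (1 : ℂ) - z⁻¹ = -z⁻¹ * (1 - z) := by field_simp; ring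
  rw [this]; ring

theorem mAL_inv (q x z : ℂ) (hq0 : q ≠ 0) (hq : ‖q‖ < 1)
    (hx : x ≠ 0) (hz : z ≠ 0)
    (hz' : ∀ k : ℤ, z ≠ q ^ k) (hxz : ∀ k : ℤ, x * z ≠ q ^ k) :
    mAL x q z = x⁻¹ * mAL x⁻¹ q z⁻¹ := by
  have key : ∀ s : ℤ,
      ((-1 : ℂ) ^ (2-s) * q ^ ((2-s) * ((2-s) - 1) / 2) * (z⁻¹) ^ (2-s)) /
        (1 - q ^ ((2-s) - 1) * x⁻¹ * z⁻¹)
      = (-(x/z)) * (((-1 : ℂ) ^ s * q ^ (s * (s - 1) / 2) * z ^ s) /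
        (1 - q ^ (s - 1) * x * z)) := by
    intro s
    have hD : (1 : ℂ) - q ^ (s-1) * x * z ≠ 0 := by
      intro h
      apply hxz (1 - s)
      have h1 : q ^ (s-1) * x * z = 1 := by linear_combination -h
      have h2 : x * z = (q ^ (s-1))⁻¹ :=
        (inv_eq_of_mul_eq_one_right (by rw [← h1]; ring)).symm
      rw [h2, ← zpow_neg]
      norm_num
    have hexp : (2-s) * ((2-s) - 1) / 2 = s * (s - 1) / 2 + (1 - s) := by
      have h2 : (2-s) * ((2-s)-1) = s * (s-1) + (1-s) * 2 := by ring
      rw [h2, Int.add_mul_ediv_right _ _ (two_ne_zero)]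
    have hqsplit : q ^ ((2-s) * ((2-s) - 1) / 2)
        = q ^ (s * (s-1) / 2) * q ^ (1-s) := by
      rw [hexp, zpow_add₀ hq0]
    have hne : (-1 : ℂ) ≠ 0 := by norm_num
    have hsq : (-1 : ℂ) ^ s * (-1 : ℂ) ^ s = 1 := by
      rw [← mul_zpow]; norm_num
    have hneg : (-1 : ℂ) ^ (2-s) = (-1 : ℂ) ^ s := by
      rw [zpow_sub₀ hne, show ((-1:ℂ) ^ (2:ℤ)) = 1 by norm_num,
        div_eq_iff (zpow_ne_zero s hne)]
      exact hsq.symm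
    have hzp : (z⁻¹) ^ (2-s) = z ^ s * z⁻¹ * z⁻¹ := by
      rw [inv_zpow, ← zpow_neg, show -(2-s) = s + -1 + -1 by ring,
        zpow_add₀ hz, zpow_add₀ hz, zpow_neg_one]
    have hq1 : q ^ (1-s) * q ^ (s-1) = 1 := by
      rw [← zpow_add₀ hq0]; norm_num
    have hDen : (1 : ℂ) - q ^ ((2-s)-1) * x⁻¹ * z⁻¹
        = (-(q ^ (1-s) * x⁻¹ * z⁻¹)) * (1 - q ^ (s-1) * x * z) := by
      rw [show (2-s)-1 = 1-s by ring]
      field_simp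
      linear_combination (-(x*z)) * hq1
    have hc : -(q ^ (1-s) * x⁻¹ * z⁻¹) ≠ 0 := by
      simp [zpow_ne_zero, hq0, hx, hz]
    rw [hneg, hqsplit, hzp, hDen, mul_div_assoc' (-(x/z)),
      div_eq_div_iff (mul_ne_zero hc hD) hD]
    field_simp
  have hJ := jP_inv z q hq hq0 hz hz'
  unfold mAL
  rw [hJ]
  have hsum : (∑' r : ℤ, ((-1:ℂ) ^ r * q ^ (r * (r-1) / 2) * (z⁻¹) ^ r) /
        (1 - q ^ (r-1) * x⁻¹ * z⁻¹))
      = (-(x/z)) * ∑' r : ℤ, ((-1:ℂ) ^ r * q ^ (r * (r-1) / 2) * z ^ r) /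
        (1 - q ^ (r-1) * x * z) := by
    rw [← tsum_mul_left,
      ← Equiv.tsum_eq (Equiv.subLeft (2:ℤ)) (fun r : ℤ =>
        ((-1:ℂ) ^ r * q ^ (r * (r-1) / 2) * (z⁻¹) ^ r) /
          (1 - q ^ (r-1) * x⁻¹ * z⁻¹))]
    exact tsum_congr fun s => by simpa using key s
  rw [hsum]
  by_cases hJ0 : jP z q = 0
  · simp [hJ0]
  · field_simp
    ring_nf
    exact tsum_congr fun r => by ring
end
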